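/- Let f be a Barenblatt profile with exponent α > N − 2 such that f(η) → 0, f'(η) → 0 and f''(η) → 0 as η → ∞. Suppose F(η) = α·f(η) + η·f'(η) has exactly n ≥ 1 zeros η_1 < η_2 < ⋯ < η_n in (0,∞), and that F alternates sign: with η_0 = 0, the sign of F on (η_{m−1}, η_m) is (−1)^{m+1} for m = 1,…,n, and the sign of F on (η_n, ∞) is (−1)^n. Then f has exactly n − 1 zeros in [0,∞), one in each interval (η_m, η_{m+1}) for m = 1,…,n−1, and f has no zero in [0, η_1] ∪ [η_n, ∞). -/

import Mathlib

/-- A Barenblatt profile with exponent `α` (dimension `N`, parameter `γ`). -/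
def IsBarenblattProfile (N : ℕ) (γ α : ℝ) (f f' f'' : ℝ → ℝ) : Prop :=
  (∀ η ∈ Set.Ici (0:ℝ), HasDerivWithinAt f (f' η) (Set.Ici 0) η) ∧
  ContinuousOn f' (Set.Ici 0) ∧
  (∀ η ∈ Set.Ioi (0:ℝ), HasDerivWithinAt f' (f'' η) (Set.Ioi 0) η) ∧
  f 0 = 1 ∧ f' 0 = 0 ∧
  (∀ η : ℝ, 0 < η →
    f'' η + (((N : ℝ) - 1) / η) * f' η =
      -(1/2) * (α * f η + η * f' η) + (γ/2) * |α * f η + η * f' η|)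

open Set Filter

/-- Energy uniqueness: a solution of the linear ODE vanishing to first order at the
left endpoint must vanish, contradicting `F < 0`. -/
lemma energy_contra (Nr α κ a b : ℝ) (h0a : 0 < a) (hab : a < b)
    (hNr : 1 ≤ Nr) (hα : 0 < α) (hκ : 0 < κ) (f f' f'' : ℝ → ℝ)
    (hd : ∀ η ∈ Set.Ico a b, HasDerivAt f (f' η) η)
    (hd' : ∀ η ∈ Set.Ico a b, HasDerivAt f' (f'' η) η)
    (hode : ∀ η ∈ Set.Ioo a b, f'' η = -((Nr-1)/η) * f' η - κ * (α * f η + η * f' η))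
    (hfa : f a = 0) (hfa' : f' a = 0)
    (hFneg : ∀ η ∈ Set.Ioo a b, α * f η + η * f' η < 0) : False := by
  set t := (a+b)/2 with ht
  have hat : a < t := by rw [ht]; linarith
  have htb : t < b := by rw [ht]; linarith
  set E : ℝ → ℝ := fun η => f' η ^ 2 + κ * α * f η ^ 2 with hE
  have hsub : Set.Icc a t ⊆ Set.Ico a b := fun x hx => ⟨hx.1, lt_of_le_of_lt hx.2 htb⟩
  have hEd : ∀ η ∈ Set.Ioo a t, HasDerivAt E (-2*(f' η)^2*((Nr-1)/η + κ*η)) η := by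
    intro η hη
    have hη' : η ∈ Set.Ico a b := hsub ⟨hη.1.le, hη.2.le⟩
    have h1 := (hd' η hη').pow 2
    have h2 := ((hd η hη').pow 2).const_mul (κ*α)
    have h3 := h1.add h2
    refine h3.congr_deriv ?_
    have hodeη := hode η ⟨hη.1, hη.2.trans htb⟩
    rw [hodeη]
    push_cast
    ring
  have hEc : ContinuousOn E (Set.Icc a t) := by
    intro x hx
    exact (((hd' x (hsub hx)).pow 2).add (((hd x (hsub hx)).pow 2).const_mul
      (κ*α))).continuousAt.continuousWithinAt
  have hanti : AntitoneOn E (Set.Icc a t) := by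
    apply antitoneOn_of_deriv_nonpos (convex_Icc a t) hEc
    · intro x hx
      rw [interior_Icc] at hx
      exact (hEd x hx).differentiableAt.differentiableWithinAt
    · intro x hx
      rw [interior_Icc] at hx
      rw [(hEd x hx).deriv]
      have hx0 : 0 < x := lt_of_lt_of_le h0a hx.1.le
      have h1 : 0 ≤ (Nr-1)/x := div_nonneg (by linarith) hx0.le
      have h2 : 0 < κ * x := mul_pos hκ hx0
      nlinarith [sq_nonneg (f' x)]
  have hEt : f' t ^ 2 + κ * α * f t ^ 2 ≤ 0 := by
    have h := hanti (Set.left_mem_Icc.2 hat.le) ⟨hat.le, le_refl t⟩ hat.le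
    simpa [hE, hfa, hfa'] using h
  have hf't : f' t = 0 := by
    have h1 : 0 ≤ κ * α * f t ^ 2 := by positivity
    nlinarith [sq_nonneg (f' t)]
  have hft : f t = 0 := by
    have h1 : κ * α * f t ^ 2 ≤ 0 := by nlinarith [sq_nonneg (f' t)]
    have h2 : f t ^ 2 ≤ 0 := by
      have := mul_pos hκ hα
      nlinarith
    nlinarith [sq_nonneg (f t)]
  have := hFneg t ⟨hat, htb⟩
  rw [hft, hf't] at this
  simp at this

/-- With `F < 0` on `(a,b)`, `f` has at most one zero in `(a,b)`. -/
lemma unique_zero_of_Fneg (α a b : ℝ) (h0a : 0 < a) (hα : 0 < α) (f f' : ℝ → ℝ)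
    (hd : ∀ η ∈ Set.Ioo a b, HasDerivAt f (f' η) η)
    (hFneg : ∀ η ∈ Set.Ioo a b, α * f η + η * f' η < 0) :
    ∀ x ∈ Set.Ioo a b, ∀ y ∈ Set.Ioo a b, f x = 0 → f y = 0 → x = y := by
  -- main step: no two zeros x < y
  have key : ∀ x ∈ Set.Ioo a b, ∀ y ∈ Set.Ioo a b, f x = 0 → f y = 0 → x < y → False := by
    intro x hx y hy hfx hfy hxy
    have hy0 : 0 < y := lt_trans h0a hy.1
    have hf'y : f' y < 0 := by
      have h := hFneg y hy
      rw [hfy] at h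
      by_contra hcon
      push_neg at hcon
      nlinarith
    -- there is a point w in (x,y) with f w > 0
    obtain ⟨w, hw, hfw⟩ : ∃ w ∈ Set.Ioo x y, 0 < f w := by
      have hslope : Filter.Tendsto (slope f y) (nhdsWithin y (Set.Iio y)) (nhds (f' y)) := by
        have h1 := hasDerivAt_iff_tendsto_slope.1 (hd y hy)
        exact h1.mono_left (nhdsWithin_mono y (fun z hz => Set.mem_compl_singleton_iff.2 (ne_of_lt hz)))
      have hev : ∀ᶠ z in nhdsWithin y (Set.Iio y), slope f y z < 0 :=
        hslope.eventually_lt_const hf'y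
      have hev2 : Set.Ioo x y ∈ nhdsWithin y (Set.Iio y) :=
        Ioo_mem_nhdsLT_of_mem ⟨hxy, le_refl y⟩
      obtain ⟨z, hz1, hz2⟩ := (hev.and hev2).exists
      refine ⟨z, hz2, ?_⟩
      have hzy : z - y < 0 := by linarith [hz2.2]
      rw [slope_def_field, hfy, sub_zero] at hz1
      rcases div_neg_iff.1 hz1 with ⟨h1, h2⟩ | ⟨h1, h2⟩
      · exact h1
      · linarith
    -- maximum of f on [x,y] is interior and positive
    have hIcc : Set.Icc x y ⊆ Set.Ioo a b := fun z hz => ⟨lt_of_lt_of_le hx.1 hz.1, lt_of_le_of_lt hz.2 hy.2⟩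
    have hcont : ContinuousOn f (Set.Icc x y) := fun z hz =>
      (hd z (hIcc hz)).continuousAt.continuousWithinAt
    obtain ⟨c, hc, hmax⟩ := isCompact_Icc.exists_isMaxOn (Set.nonempty_Icc.2 hxy.le) hcont
    have hfc : 0 < f c := lt_of_lt_of_le hfw (hmax ⟨hw.1.le, hw.2.le⟩)
    have hcx : c ≠ x := fun h => by rw [h, hfx] at hfc; exact lt_irrefl 0 hfc
    have hcy : c ≠ y := fun h => by rw [h, hfy] at hfc; exact lt_irrefl 0 hfc
    have hcIoo : c ∈ Set.Ioo x y := ⟨lt_of_le_of_ne hc.1 (Ne.symm hcx), lt_of_le_of_ne hc.2 hcy⟩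
    have hloc : IsLocalMax f c := hmax.isLocalMax (Icc_mem_nhds hcIoo.1 hcIoo.2)
    have hderiv0 : f' c = 0 := hloc.hasDerivAt_eq_zero (hd c (hIcc hc))
    have := hFneg c (hIcc hc)
    rw [hderiv0] at this
    nlinarith
  intro x hx y hy hfx hfy
  rcases lt_trichotomy x y with h | h | h
  · exact absurd (key x hx y hy hfx hfy h) (fun h => h.elim)
  · exact h
  · exact absurd (key y hy x hx hfy hfx h) (fun h => h.elim)

/-- At a root `r` of `F` with `F < 0` on the right, `f r > 0`. -/
lemma f_pos_at_root (Nr α κ r b : ℝ) (h0r : 0 < r) (hrb : r < b)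
    (hNr : 1 ≤ Nr) (hα : 0 < α) (hκ : 0 < κ) (hαN : Nr - 2 < α)
    (f f' f'' : ℝ → ℝ)
    (hd : ∀ η ∈ Set.Ico r b, HasDerivAt f (f' η) η)
    (hd' : ∀ η ∈ Set.Ico r b, HasDerivAt f' (f'' η) η)
    (hode : ∀ η ∈ Set.Ioo r b, f'' η = -((Nr-1)/η) * f' η - κ * (α * f η + η * f' η))
    (hodeR : f'' r = -((Nr-1)/r) * f' r)
    (hFr : α * f r + r * f' r = 0)
    (hFneg : ∀ η ∈ Set.Ioo r b, α * f η + η * f' η < 0) : 0 < f r := by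
  set F : ℝ → ℝ := fun η => α * f η + η * f' η with hF
  have hrmem : r ∈ Set.Ico r b := ⟨le_refl r, hrb⟩
  have hDF : HasDerivAt F ((α + 2 - Nr) * f' r) r := by
    have h := ((hd r hrmem).const_mul α).add ((hasDerivAt_id r).mul (hd' r hrmem))
    refine h.congr_deriv ?_
    simp only [id_eq]
    rw [hodeR]
    field_simp
    ring
  -- slope from the right is nonpositive
  have htend : Filter.Tendsto (slope F r) (nhdsWithin r (Set.Ioi r)) (nhds ((α + 2 - Nr) * f' r)) :=
    (hasDerivAt_iff_tendsto_slope.1 hDF).mono_left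
      (nhdsWithin_mono _ (fun z hz => Set.mem_compl_singleton_iff.2 (ne_of_gt hz)))
  have hle : (α + 2 - Nr) * f' r ≤ 0 := by
    apply le_of_tendsto htend
    have hev : Set.Ioo r b ∈ nhdsWithin r (Set.Ioi r) :=
      Ioo_mem_nhdsGT_of_mem ⟨le_refl r, hrb⟩
    filter_upwards [hev] with z hz
    rw [slope_def_field]
    have h1 : F z < 0 := hFneg z hz
    have h2 : 0 < z - r := by linarith [hz.1]
    have h3 : F r = 0 := hFr
    rw [h3, sub_zero]
    exact (div_neg_of_neg_of_pos h1 h2).le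
  have hf'r : f' r ≤ 0 := by
    have hpos : 0 < α + 2 - Nr := by linarith
    by_contra hcon
    push_neg at hcon
    nlinarith
  have hfr : 0 ≤ f r := by nlinarith
  rcases lt_or_eq_of_le hfr with h | h
  · exact h
  · exfalso
    have hfr0 : f r = 0 := h.symm
    have hf'r0 : f' r = 0 := by
      rw [hfr0] at hFr
      have : r * f' r = 0 := by linarith
      rcases mul_eq_zero.1 this with h' | h'
      · linarith
      · exact h'
    exact energy_contra Nr α κ r b h0r hrb hNr hα hκ f f' f'' hd hd' hode hfr0 hf'r0 hFneg

lemma hasDerivAt_rpow_mul (p : ℝ) (g : ℝ → ℝ) (η v : ℝ) (hη : 0 < η)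
    (hg : HasDerivAt g v η) :
    HasDerivAt (fun x => x ^ p * g x) (η ^ (p-1) * (p * g η + η * v)) η := by
  have h1 : HasDerivAt (fun x : ℝ => x ^ p) (p * η ^ (p-1)) η :=
    Real.hasDerivAt_rpow_const (Or.inl hη.ne')
  have h := h1.mul hg
  refine h.congr_deriv ?_
  have hpow : η ^ p = η ^ (p-1) * η := by
    nth_rewrite 1 [show p = (p-1) + 1 by ring]
    rw [Real.rpow_add hη, Real.rpow_one]
  rw [hpow]
  ring

set_option maxHeartbeats 1600000 in
/-- Tail lemma: with `F < 0` on `(R,∞)` and `f → 0`, `f` has no zero in `(R,∞)`. -/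
lemma tail_no_zero (Nr α κ R : ℝ) (h0R : 0 < R)
    (hα : 0 < α) (hκ : 0 < κ) (hαN : Nr - 2 < α)
    (f f' f'' : ℝ → ℝ)
    (hd : ∀ η ∈ Set.Ioi R, HasDerivAt f (f' η) η)
    (hd' : ∀ η ∈ Set.Ioi R, HasDerivAt f' (f'' η) η)
    (hode : ∀ η ∈ Set.Ioi R, f'' η = -((Nr-1)/η) * f' η - κ * (α * f η + η * f' η))
    (hFneg : ∀ η ∈ Set.Ioi R, α * f η + η * f' η < 0)
    (hf0 : Filter.Tendsto f Filter.atTop (nhds 0))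
    (z₀ : ℝ) (hz₀ : R < z₀) (hfz₀ : f z₀ = 0) : False := by
  have hpos : ∀ {η : ℝ}, η ∈ Set.Ioi R → 0 < η := fun hη => lt_trans h0R hη
  have hz₀0 : 0 < z₀ := lt_trans h0R hz₀
  have hf'z₀ : f' z₀ < 0 := by
    have h := hFneg z₀ hz₀
    rw [hfz₀] at h
    nlinarith
  have hsub : Set.Ici z₀ ⊆ Set.Ioi R := fun x hx => lt_of_lt_of_le hz₀ hx
  -- f < 0 on Ioi z₀
  have hfneg : ∀ η ∈ Set.Ioi z₀, f η < 0 := by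
    have hGd : ∀ η ∈ Set.Ioi R, HasDerivAt (fun x => x ^ α * f x)
        (η ^ (α-1) * (α * f η + η * f' η)) η :=
      fun η hη => hasDerivAt_rpow_mul α f η (f' η) (hpos hη) (hd η hη)
    have hGanti : StrictAntiOn (fun x => x ^ α * f x) (Set.Ici z₀) := by
      apply strictAntiOn_of_deriv_neg (convex_Ici z₀)
      · exact fun x hx => (hGd x (hsub hx)).continuousAt.continuousWithinAt
      · intro x hx
        rw [interior_Ici] at hx
        rw [(hGd x (hsub (Set.Ioi_subset_Ici_self hx))).deriv]
        have hx0 : 0 < x := lt_trans hz₀0 hx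
        have h1 : 0 < x ^ (α - 1) := Real.rpow_pos_of_pos hx0 _
        have h2 : α * f x + x * f' x < 0 := hFneg x (hsub (Set.Ioi_subset_Ici_self hx))
        exact mul_neg_of_pos_of_neg h1 h2
    intro η hη
    have h := hGanti Set.self_mem_Ici (Set.mem_Ici.2 hη.le) hη
    beta_reduce at h
    rw [hfz₀, mul_zero] at h
    have hη0 : 0 < η := lt_trans hz₀0 hη
    have := Real.rpow_pos_of_pos hη0 α
    nlinarith
  -- H = η^(Nr-1) * f' is strictly increasing on Ici z₀
  have hHd : ∀ η ∈ Set.Ioi R, HasDerivAt (fun x => x ^ (Nr-1) * f' x)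
      (η ^ (Nr-2) * (-(κ * η * (α * f η + η * f' η)))) η := by
    intro η hη
    have h := hasDerivAt_rpow_mul (Nr-1) f' η (f'' η) (hpos hη) (hd' η hη)
    have he : Nr - 1 - 1 = Nr - 2 := by ring
    rw [he] at h
    convert h using 2
    rw [hode η hη]
    field_simp [(hpos hη).ne']
    ring
  have hHmono : StrictMonoOn (fun x => x ^ (Nr-1) * f' x) (Set.Ici z₀) := by
    apply strictMonoOn_of_deriv_pos (convex_Ici z₀)
    · exact fun x hx => (hHd x (hsub hx)).continuousAt.continuousWithinAt
    · intro x hx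
      rw [interior_Ici] at hx
      rw [(hHd x (hsub (Set.Ioi_subset_Ici_self hx))).deriv]
      have hx0 : 0 < x := lt_trans hz₀0 hx
      have h1 : 0 < x ^ (Nr - 2) := Real.rpow_pos_of_pos hx0 _
      have h2 : α * f x + x * f' x < 0 := hFneg x (hsub (Set.Ioi_subset_Ici_self hx))
      have h3 : 0 < -(κ * x * (α * f x + x * f' x)) := by
        nlinarith [mul_pos (mul_pos hκ hx0) (neg_pos.2 h2)]
      exact mul_pos h1 h3
  by_cases hcase : ∃ η₁ ∈ Set.Ioi z₀, 0 ≤ η₁ ^ (Nr-1) * f' η₁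
  · -- Case B
    obtain ⟨η₁, hη₁, hHη₁⟩ := hcase
    have hη₁0 : 0 < η₁ := lt_trans hz₀0 hη₁
    have hf'pos : ∀ η ∈ Set.Ioi η₁, 0 < f' η := by
      intro η hη
      have h := hHmono (Set.mem_Ici.2 hη₁.le) (Set.mem_Ici.2 (hη₁.le.trans hη.le)) hη
      simp only at h
      have hη0 : 0 < η := lt_trans hη₁0 hη
      have h2 : 0 < η ^ (Nr-1) := Real.rpow_pos_of_pos hη0 _
      nlinarith
    -- F' on Ioi R
    have hDF : ∀ η ∈ Set.Ioi R, HasDerivAt (fun x => α * f x + x * f' x)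
        ((α + 2 - Nr) * f' η - κ * η * (α * f η + η * f' η)) η := by
      intro η hη
      have h := ((hd η hη).const_mul α).add ((hasDerivAt_id η).mul (hd' η hη))
      refine h.congr_deriv ?_
      simp only [id_eq]
      rw [hode η hη]
      field_simp [(hpos hη).ne']
      ring
    -- choose η₂
    obtain ⟨η₂, hη₂1, hη₂κ⟩ : ∃ η₂ : ℝ, η₁ + 1 ≤ η₂ ∧ |α - 1| + 1 ≤ κ * η₂ ^ 2 := by
      refine ⟨max (η₁ + 1) (Real.sqrt ((|α - 1| + 1)/κ)), le_max_left _ _, ?_⟩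
      have hs := le_max_right (η₁ + 1) (Real.sqrt ((|α - 1| + 1)/κ))
      have harg : (0:ℝ) ≤ (|α - 1| + 1)/κ := by positivity
      have h1 : Real.sqrt ((|α - 1| + 1)/κ) ^ 2 ≤ (max (η₁ + 1) (Real.sqrt ((|α - 1| + 1)/κ))) ^ 2 :=
        pow_le_pow_left₀ (Real.sqrt_nonneg _) hs 2
      rw [Real.sq_sqrt harg] at h1
      rw [div_le_iff₀ hκ] at h1
      nlinarith
    have hη₁η₂ : η₁ < η₂ := by linarith
    have hη₂0 : 0 < η₂ := lt_trans hη₁0 hη₁η₂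
    have hη₂z₀ : z₀ < η₂ := lt_trans hη₁ hη₁η₂
    have hD : 0 < κ * η₂ ^ 2 - (α - 1) := by
      have h1 := abs_nonneg (α - 1)
      have h2 := le_abs_self (α - 1)
      nlinarith
    obtain ⟨lam, hlam, hlamD⟩ : ∃ lam : ℝ, 0 < lam ∧ lam * (κ * η₂ ^ 2 - (α - 1)) = η₂ :=
      ⟨η₂ / (κ * η₂ ^ 2 - (α - 1)), div_pos hη₂0 hD, by rw [div_mul_cancel₀]; exact hD.ne'⟩
    have hsub2 : Set.Ici η₂ ⊆ Set.Ioi R := fun x hx => lt_of_lt_of_le (lt_trans hz₀ hη₂z₀) hx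
    -- Z and its derivative
    have hZd : ∀ η ∈ Set.Ioi R, HasDerivAt
        (fun x => x ^ α * (-(f x)) + lam * (x ^ (α-1) * (-(α * f x + x * f' x))))
        (η ^ (α-1) * (-(α * f η + η * f' η)) + lam * (η ^ (α-2) *
          ((α-1) * (-(α * f η + η * f' η)) +
            η * (-((α + 2 - Nr) * f' η - κ * η * (α * f η + η * f' η)))))) η := by
      intro η hη
      have h1 := hasDerivAt_rpow_mul α (fun x => -(f x)) η (-(f' η)) (hpos hη) (hd η hη).neg
      have h2 := (hasDerivAt_rpow_mul (α-1) (fun x => -(α * f x + x * f' x)) η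
        (-((α + 2 - Nr) * f' η - κ * η * (α * f η + η * f' η))) (hpos hη)
        (hDF η hη).neg).const_mul lam
      have he : α - 1 - 1 = α - 2 := by ring
      rw [he] at h2
      have h := h1.add h2
      refine h.congr_deriv ?_
      ring
    -- Z' ≤ 0 on Ici η₂
    have hZanti : AntitoneOn
        (fun x => x ^ α * (-(f x)) + lam * (x ^ (α-1) * (-(α * f x + x * f' x))))
        (Set.Ici η₂) := by
      apply antitoneOn_of_deriv_nonpos (convex_Ici η₂)
      · exact fun x hx => (hZd x (hsub2 hx)).continuousAt.continuousWithinAt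
      · intro x hx
        rw [interior_Ici] at hx
        exact (hZd x (hsub2 (Set.Ioi_subset_Ici_self hx))).differentiableAt.differentiableWithinAt
      · intro x hx
        rw [interior_Ici] at hx
        rw [(hZd x (hsub2 (Set.Ioi_subset_Ici_self hx))).deriv]
        have hx0 : 0 < x := lt_trans hη₂0 hx
        have hux : 0 < -(α * f x + x * f' x) := by
          have h := hFneg x (hsub2 (Set.Ioi_subset_Ici_self hx))
          linarith
        have hf'x : 0 < f' x := hf'pos x (lt_trans hη₁η₂ hx)
        have hp1 : 0 < x ^ (α-2) := Real.rpow_pos_of_pos hx0 _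
        have hxx : x ^ (α-1) = x ^ (α-2) * x := by
          nth_rewrite 1 [show α - 1 = (α-2) + 1 by ring]
          rw [Real.rpow_add hx0, Real.rpow_one]
        rw [hxx]
        have hkey : x + lam * (α - 1) - lam * κ * x ^ 2 ≤ 0 := by
          have hxgt : η₂ < x := hx
          have h2 : κ * η₂ ^ 2 ≤ κ * η₂ * x := by
            nlinarith [mul_nonneg (mul_pos hκ hη₂0).le (sub_nonneg.2 hxgt.le)]
          have h3 : 1 - α ≤ κ * η₂ ^ 2 := by
            have habs : |α - 1| = |1 - α| := abs_sub_comm α 1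
            have h4 := le_abs_self (1 - α)
            linarith
          have h1 : 0 ≤ (x - η₂) * (κ * η₂ * x + α - 1) :=
            mul_nonneg (by linarith) (by linarith)
          have hgoal : (x + lam * (α - 1) - lam * κ * x ^ 2) * (κ * η₂ ^ 2 - (α - 1)) ≤ 0 := by
            have hexp : (x + lam * (α - 1) - lam * κ * x ^ 2) * (κ * η₂ ^ 2 - (α - 1)) =
                x * (κ * η₂ ^ 2 - (α - 1)) + (α - 1) * (lam * (κ * η₂ ^ 2 - (α - 1)))
                  - κ * x ^ 2 * (lam * (κ * η₂ ^ 2 - (α - 1))) := by ring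
            rw [hexp, hlamD]
            nlinarith [h1]
          by_contra hcon
          push_neg at hcon
          nlinarith [mul_pos hcon hD]
        have hFd' : -((α + 2 - Nr) * f' x - κ * x * (α * f x + x * f' x))
            ≤ -(κ * x * (-(α * f x + x * f' x))) := by
          have h6 : 0 < α + 2 - Nr := by linarith
          have h7 := mul_pos h6 hf'x
          linarith
        have h5 : x * (-((α + 2 - Nr) * f' x - κ * x * (α * f x + x * f' x)))
            ≤ x * (-(κ * x * (-(α * f x + x * f' x)))) :=
          mul_le_mul_of_nonneg_left hFd' hx0.le
        have h7 : lam * ((α - 1) * (-(α * f x + x * f' x))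
              + x * (-((α + 2 - Nr) * f' x - κ * x * (α * f x + x * f' x))))
            ≤ lam * ((α - 1) * (-(α * f x + x * f' x))
              + x * (-(κ * x * (-(α * f x + x * f' x))))) :=
          mul_le_mul_of_nonneg_left (by linarith) hlam.le
        have hb : x * (-(α * f x + x * f' x)) + lam * ((α - 1) * (-(α * f x + x * f' x))
              + x * (-((α + 2 - Nr) * f' x - κ * x * (α * f x + x * f' x))))
            ≤ (-(α * f x + x * f' x)) * (x + lam * (α - 1) - lam * κ * x ^ 2) := by
          have heq : x * (-(α * f x + x * f' x)) + lam * ((α - 1) * (-(α * f x + x * f' x))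
              + x * (-(κ * x * (-(α * f x + x * f' x)))))
              = (-(α * f x + x * f' x)) * (x + lam * (α - 1) - lam * κ * x ^ 2) := by ring
          linarith
        have hfin : (-(α * f x + x * f' x)) * (x + lam * (α - 1) - lam * κ * x ^ 2) ≤ 0 :=
          mul_nonpos_of_nonneg_of_nonpos hux.le hkey
        have heq2 : x ^ (α-2) * x * (-(α * f x + x * f' x)) + lam * (x ^ (α-2) *
            ((α-1) * (-(α * f x + x * f' x)) +
              x * (-((α + 2 - Nr) * f' x - κ * x * (α * f x + x * f' x)))))
            = x ^ (α-2) * (x * (-(α * f x + x * f' x)) + lam * ((α - 1) * (-(α * f x + x * f' x))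
              + x * (-((α + 2 - Nr) * f' x - κ * x * (α * f x + x * f' x))))) := by ring
        rw [heq2]
        exact mul_nonpos_of_nonneg_of_nonpos hp1.le (le_trans hb hfin)
    -- bound: η^α * (-f η) ≤ B for η ≥ η₂
    have hB : ∀ η ∈ Set.Ici η₂, η ^ α * (-(f η)) ≤
        η₂ ^ α * (-(f η₂)) + lam * (η₂ ^ (α-1) * (-(α * f η₂ + η₂ * f' η₂))) := by
      intro η hη
      have hη0 : 0 < η := lt_of_lt_of_le hη₂0 hη
      have hηR : η ∈ Set.Ioi R := lt_of_lt_of_le (lt_trans hz₀ hη₂z₀) hη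
      have h1 := hZanti Set.self_mem_Ici hη hη
      beta_reduce at h1
      have h3 : α * f η + η * f' η < 0 := hFneg η hηR
      have h2 : 0 ≤ lam * (η ^ (α-1) * (-(α * f η + η * f' η))) :=
        mul_nonneg hlam.le (mul_nonneg (Real.rpow_pos_of_pos hη0 _).le (by linarith))
      linarith
    -- final contradiction in case B
    set B : ℝ := η₂ ^ α * (-(f η₂)) + lam * (η₂ ^ (α-1) * (-(α * f η₂ + η₂ * f' η₂))) with hBdef
    have hcpos : 0 < η₂ ^ (Nr-1) * f' η₂ := by
      have h := hHmono (Set.mem_Ici.2 hη₁.le) (Set.mem_Ici.2 (hη₁.le.trans hη₁η₂.le)) hη₁η₂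
      simp only at h
      linarith
    have htend : Filter.Tendsto (fun η : ℝ => (α * B) * η ^ (Nr - 2 - α))
        Filter.atTop (nhds 0) := by
      have h := tendsto_rpow_neg_atTop (show (0:ℝ) < α - (Nr - 2) by linarith)
      simp only [show -(α - (Nr - 2)) = Nr - 2 - α from by ring] at h
      have h2 := h.const_mul (α * B)
      rw [mul_zero] at h2
      exact h2
    obtain ⟨η₃, h1, h2⟩ :=
      ((htend.eventually_lt_const hcpos).and (Filter.eventually_gt_atTop η₂)).exists
    have hη₃0 : 0 < η₃ := lt_trans hη₂0 h2
    have hη₃R : η₃ ∈ Set.Ioi R := lt_trans (lt_trans hz₀ hη₂z₀) h2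
    have hHlt : η₂ ^ (Nr-1) * f' η₂ < η₃ ^ (Nr-1) * f' η₃ := by
      have h := hHmono (Set.mem_Ici.2 (hη₁.le.trans hη₁η₂.le))
        (Set.mem_Ici.2 ((hη₁.le.trans hη₁η₂.le).trans h2.le)) h2
      exact h
    have hstep1 : η₃ * f' η₃ ≤ α * (-(f η₃)) := by
      have := hFneg η₃ hη₃R
      linarith
    have hstep2 : η₃ ^ (Nr-1) * f' η₃ = η₃ ^ (Nr-2) * (η₃ * f' η₃) := by
      nth_rewrite 1 [show Nr - 1 = (Nr - 2) + 1 by ring]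
      rw [Real.rpow_add hη₃0, Real.rpow_one]
      ring
    have hp2 : (0:ℝ) < η₃ ^ (Nr-2) := Real.rpow_pos_of_pos hη₃0 _
    have hBη₃ := hB η₃ (Set.mem_Ici.2 h2.le)
    have hinv : (0:ℝ) < η₃ ^ (-α) := Real.rpow_pos_of_pos hη₃0 _
    have hmf : -(f η₃) ≤ η₃ ^ (-α) * B := by
      have hmul := mul_le_mul_of_nonneg_left hBη₃ hinv.le
      have hone : η₃ ^ (-α) * η₃ ^ α = 1 := by
        rw [← Real.rpow_add hη₃0]
        simp
      rw [← mul_assoc, hone, one_mul] at hmul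
      exact hmul
    have hbound : η₃ ^ (Nr-1) * f' η₃ ≤ α * B * η₃ ^ (Nr - 2 - α) := by
      rw [hstep2]
      have hstep3 : η₃ ^ (Nr-2) * (η₃ * f' η₃) ≤ η₃ ^ (Nr-2) * (α * (-(f η₃))) :=
        mul_le_mul_of_nonneg_left hstep1 hp2.le
      have hstep4 : η₃ ^ (Nr-2) * (α * (-(f η₃))) ≤ η₃ ^ (Nr-2) * (α * (η₃ ^ (-α) * B)) :=
        mul_le_mul_of_nonneg_left (mul_le_mul_of_nonneg_left hmf hα.le) hp2.le
      have hstep5 : η₃ ^ (Nr-2) * (α * (η₃ ^ (-α) * B)) = α * B * η₃ ^ (Nr - 2 - α) := by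
        rw [show Nr - 2 - α = (Nr - 2) + (-α) by ring, Real.rpow_add hη₃0]
        ring
      linarith
    linarith
  · -- Case A : H < 0 on Ioi z₀, so f' < 0, f decreasing and negative, contradicting f → 0
    push_neg at hcase
    have hf'neg : ∀ η ∈ Set.Ioi z₀, f' η < 0 := by
      intro η hη
      have h := hcase η hη
      have hη0 : 0 < η := lt_trans hz₀0 hη
      have h2 : 0 < η ^ (Nr-1) := Real.rpow_pos_of_pos hη0 _
      by_contra hcon
      push_neg at hcon
      exact absurd (mul_nonneg h2.le hcon) (not_le.2 h)
    have hfanti : StrictAntiOn f (Set.Ici z₀) := by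
      apply strictAntiOn_of_deriv_neg (convex_Ici z₀)
      · exact fun x hx => (hd x (hsub hx)).continuousAt.continuousWithinAt
      · intro x hx
        rw [interior_Ici] at hx
        rw [(hd x (hsub (Set.Ioi_subset_Ici_self hx))).deriv]
        exact hf'neg x hx
    have hneg1 : f (z₀ + 1) < 0 := hfneg (z₀ + 1) (Set.mem_Ioi.2 (by linarith))
    have hev : ∀ᶠ η in Filter.atTop, f η ≤ f (z₀ + 1) := by
      filter_upwards [Filter.eventually_ge_atTop (z₀ + 1)] with η hη
      rcases eq_or_lt_of_le hη with h | h
      · rw [← h]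
      · exact (hfanti (Set.mem_Ici.2 (by linarith)) (Set.mem_Ici.2 (by linarith)) h).le
    have := le_of_tendsto hf0 hev
    linarith


set_option maxHeartbeats 3200000

/-- If `F = α f + η f'` has exactly `n ≥ 1` positive zeros `ηs 1 < ⋯ < ηs n`
(with `ηs 0 = 0`), alternating in sign (sign `(-1)^(m+1)` on `(ηs (m-1), ηs m)`
and `(-1)^n` on `(ηs n, ∞)`), and `f, f', f'' → 0` at infinity, then `f` has
exactly `n - 1` zeros in `[0,∞)`: exactly one in each `(ηs m, ηs (m+1))` for
`m = 1,…,n-1`, and none in `[0, ηs 1] ∪ [ηs n, ∞)`. -/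
theorem barenblatt_exact_zero_count (N : ℕ) (hN : 1 ≤ N) (γ α : ℝ)
    (hγ₁ : -1 < γ) (hγ₂ : γ < 1) (hα : 0 < α) (hαN : (N : ℝ) - 2 < α)
    (f f' f'' : ℝ → ℝ) (hf : IsBarenblattProfile N γ α f f' f'')
    (hf0 : Filter.Tendsto f Filter.atTop (nhds 0))
    (hf'0 : Filter.Tendsto f' Filter.atTop (nhds 0))
    (hf''0 : Filter.Tendsto f'' Filter.atTop (nhds 0))
    (n : ℕ) (hn : 1 ≤ n) (ηs : ℕ → ℝ) (h0 : ηs 0 = 0)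
    (hmono : ∀ m : ℕ, m < n → ηs m < ηs (m + 1))
    (hroots : ∀ η : ℝ, 0 < η →
      (α * f η + η * f' η = 0 ↔ ∃ m : ℕ, 1 ≤ m ∧ m ≤ n ∧ η = ηs m))
    (halt : ∀ m : ℕ, 1 ≤ m → m ≤ n → ∀ η ∈ Set.Ioo (ηs (m - 1)) (ηs m),
      0 < (-1 : ℝ) ^ (m + 1) * (α * f η + η * f' η))
    (haltInf : ∀ η : ℝ, ηs n < η →
      0 < (-1 : ℝ) ^ n * (α * f η + η * f' η)) :
    {η : ℝ | 0 ≤ η ∧ f η = 0}.encard = ((n - 1 : ℕ) : ℕ∞) ∧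
    (∀ m : ℕ, 1 ≤ m → m + 1 ≤ n →
      ∃ η₀ ∈ Set.Ioo (ηs m) (ηs (m + 1)), f η₀ = 0 ∧
        ∀ η ∈ Set.Ioo (ηs m) (ηs (m + 1)), f η = 0 → η = η₀) ∧
    (∀ η : ℝ, 0 ≤ η → η ≤ ηs 1 → f η ≠ 0) ∧
    (∀ η : ℝ, ηs n ≤ η → f η ≠ 0) := by
  classical
  obtain ⟨hd₀, hf'c, hd'₀, hfval0, hf'val0, hodeAbs⟩ := hf
  have hd : ∀ η : ℝ, 0 < η → HasDerivAt f (f' η) η :=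
    fun η hη => (hd₀ η hη.le).hasDerivAt (Ici_mem_nhds hη)
  have hd' : ∀ η : ℝ, 0 < η → HasDerivAt f' (f'' η) η :=
    fun η hη => (hd'₀ η hη).hasDerivAt (Ioi_mem_nhds hη)
  have hcont : ContinuousOn f (Set.Ici 0) := fun x hx => (hd₀ x hx).continuousWithinAt
  have hN' : (1:ℝ) ≤ (N:ℝ) := by exact_mod_cast hN
  set κp : ℝ := (1 - γ)/2 with hκpdef
  set κm : ℝ := (1 + γ)/2 with hκmdef
  have hκp : 0 < κp := by rw [hκpdef]; linarith
  have hκm : 0 < κm := by rw [hκmdef]; linarith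
  -- signed ODE forms
  have hodePos : ∀ η : ℝ, 0 < η → 0 < α * f η + η * f' η →
      f'' η = -(((N:ℝ)-1)/η) * f' η - κp * (α * f η + η * f' η) := by
    intro η hη hF
    have h := hodeAbs η hη
    rw [abs_of_pos hF] at h
    rw [hκpdef]
    linarith
  have hodeNeg : ∀ η : ℝ, 0 < η → α * f η + η * f' η < 0 →
      f'' η = -(((N:ℝ)-1)/η) * f' η - κm * (α * f η + η * f' η) := by
    intro η hη hF
    have h := hodeAbs η hη
    rw [abs_of_neg hF] at h
    rw [hκmdef]
    linarith
  have hodeZero : ∀ η : ℝ, 0 < η → α * f η + η * f' η = 0 →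
      f'' η = -(((N:ℝ)-1)/η) * f' η := by
    intro η hη hF
    have h := hodeAbs η hη
    rw [hF] at h
    simp at h
    linarith
  -- monotonicity of the roots
  have hlt : ∀ i j : ℕ, i < j → j ≤ n → ηs i < ηs j := by
    intro i j hij hjn
    induction j with
    | zero => omega
    | succ k ih =>
      rcases Nat.lt_succ_iff_lt_or_eq.1 hij with h | h
      · exact lt_trans (ih (by omega) (by omega)) (hmono k (by omega))
      · rw [h]; exact hmono k (by omega)
  have hroot_pos : ∀ m : ℕ, 1 ≤ m → m ≤ n → 0 < ηs m := by
    intro m h1 h2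
    have := hlt 0 m (by omega) h2
    rw [h0] at this
    exact this
  -- sign of F on intervals (right form)
  have hsignIoo : ∀ m : ℕ, m < n → ∀ η ∈ Set.Ioo (ηs m) (ηs (m+1)),
      0 < (-1:ℝ)^m * (α * f η + η * f' η) := by
    intro m hm η hη
    have h := halt (m+1) (by omega) (by omega) η (by simpa using hη)
    have h2 : (-1:ℝ)^(m+1+1) = (-1:ℝ)^m := by
      rw [pow_succ, pow_succ]
      ring
    rw [h2] at h
    exact h
  -- sign of f at the roots
  have hfsign : ∀ m : ℕ, 1 ≤ m → m ≤ n → 0 < (-1:ℝ)^(m+1) * f (ηs m) := by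
    intro m h1m hmn
    have hr0 : 0 < ηs m := hroot_pos m h1m hmn
    obtain ⟨b, hb, hFsgn⟩ : ∃ b, ηs m < b ∧ ∀ η ∈ Set.Ioo (ηs m) b,
        0 < (-1:ℝ)^m * (α * f η + η * f' η) := by
      rcases lt_or_eq_of_le hmn with h | h
      · exact ⟨ηs (m+1), hmono m h, fun η hη => hsignIoo m h η hη⟩
      · refine ⟨ηs m + 1, by linarith, fun η hη => ?_⟩
        have := haltInf η (by rw [← h]; exact hη.1)
        rw [h]
        exact this
    have hdIco : ∀ η ∈ Set.Ico (ηs m) b, HasDerivAt f (f' η) η :=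
      fun η hη => hd η (lt_of_lt_of_le hr0 hη.1)
    have hd'Ico : ∀ η ∈ Set.Ico (ηs m) b, HasDerivAt f' (f'' η) η :=
      fun η hη => hd' η (lt_of_lt_of_le hr0 hη.1)
    have hFr : α * f (ηs m) + ηs m * f' (ηs m) = 0 :=
      (hroots (ηs m) hr0).2 ⟨m, h1m, hmn, rfl⟩
    have hodeR : f'' (ηs m) = -(((N:ℝ)-1)/(ηs m)) * f' (ηs m) := hodeZero _ hr0 hFr
    rcases Nat.even_or_odd m with he | ho
    · -- m even : F > 0 to the right, work with -f
      have hsm : (-1:ℝ)^m = 1 := he.neg_one_pow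
      have hFpos : ∀ η ∈ Set.Ioo (ηs m) b, 0 < α * f η + η * f' η := by
        intro η hη
        have := hFsgn η hη
        rw [hsm] at this
        linarith
      have hres := f_pos_at_root (N:ℝ) α κp (ηs m) b hr0 hb hN' hα hκp hαN
        (fun x => -(f x)) (fun x => -(f' x)) (fun x => -(f'' x))
        (fun η hη => (hdIco η hη).neg) (fun η hη => (hd'Ico η hη).neg)
        (by
          intro η hη
          have hη0 : 0 < η := lt_trans hr0 hη.1
          have h := hodePos η hη0 (hFpos η ⟨hη.1, hη.2⟩)
          beta_reduce
          rw [h]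
          ring)
        (by beta_reduce; rw [hodeR]; ring)
        (by beta_reduce; linarith)
        (by
          intro η hη
          have := hFpos η hη
          beta_reduce
          linarith)
      have hsm1 : (-1:ℝ)^(m+1) = -1 := by
        rw [pow_succ, hsm]
        norm_num
      rw [hsm1]
      beta_reduce at hres
      linarith
    · -- m odd : F < 0 to the right
      have hsm : (-1:ℝ)^m = -1 := ho.neg_one_pow
      have hFneg : ∀ η ∈ Set.Ioo (ηs m) b, α * f η + η * f' η < 0 := by
        intro η hη
        have := hFsgn η hη
        rw [hsm] at this
        linarith
      have hres := f_pos_at_root (N:ℝ) α κm (ηs m) b hr0 hb hN' hα hκm hαN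
        f f' f'' hdIco hd'Ico
        (fun η hη => hodeNeg η (lt_trans hr0 hη.1) (hFneg η hη))
        hodeR hFr hFneg
      have hsm1 : (-1:ℝ)^(m+1) = 1 := by
        rw [pow_succ, hsm]
        norm_num
      rw [hsm1]
      linarith
  -- no zero on [0, ηs 1]
  have hη1pos : 0 < ηs 1 := hroot_pos 1 le_rfl hn
  have hfirst : ∀ η : ℝ, 0 ≤ η → η ≤ ηs 1 → 0 < f η := by
    intro η hη0 hη1
    rcases eq_or_lt_of_le hη0 with h | h
    · rw [← h, hfval0]; norm_num
    · -- G = x^α f x is strictly increasing on [0, ηs 1]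
      have hGmono : StrictMonoOn (fun x => x ^ α * f x) (Set.Icc 0 (ηs 1)) := by
        apply strictMonoOn_of_deriv_pos (convex_Icc 0 (ηs 1))
        · apply ContinuousOn.mul
          · exact fun x hx =>
              (Real.continuousAt_rpow_const x α (Or.inr hα.le)).continuousWithinAt
          · exact hcont.mono (fun x hx => hx.1)
        · intro x hx
          rw [interior_Icc] at hx
          have hx0 : 0 < x := hx.1
          rw [(hasDerivAt_rpow_mul α f x (f' x) hx0 (hd x hx0)).deriv]
          have hFx : 0 < α * f x + x * f' x := by
            have h2 := hsignIoo 0 (by omega) x (by rw [h0]; exact ⟨hx.1, hx.2⟩)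
            simpa using h2
          exact mul_pos (Real.rpow_pos_of_pos hx0 _) hFx
      have hmem : η ∈ Set.Icc 0 (ηs 1) := ⟨hη0, hη1⟩
      have h2 := hGmono (Set.left_mem_Icc.2 hη1pos.le) hmem h
      simp only at h2
      rw [Real.zero_rpow hα.ne', zero_mul] at h2
      have := Real.rpow_pos_of_pos h α
      nlinarith
  -- unique zero in each interior interval
  have hconc2 : ∀ m : ℕ, 1 ≤ m → m + 1 ≤ n →
      ∃ η₀ ∈ Set.Ioo (ηs m) (ηs (m + 1)), f η₀ = 0 ∧
        ∀ η ∈ Set.Ioo (ηs m) (ηs (m + 1)), f η = 0 → η = η₀ := by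
    intro m h1m hm1n
    have hmn : m ≤ n := by omega
    have hra : 0 < ηs m := hroot_pos m h1m hmn
    have hab : ηs m < ηs (m+1) := hmono m (by omega)
    have hrb : 0 < ηs (m+1) := lt_trans hra hab
    have hfa := hfsign m h1m hmn
    have hfb := hfsign (m+1) (by omega) hm1n
    have hcIcc : ContinuousOn f (Set.Icc (ηs m) (ηs (m+1))) :=
      hcont.mono (fun x hx => le_trans hra.le hx.1)
    have hdIoo : ∀ η ∈ Set.Ioo (ηs m) (ηs (m+1)), HasDerivAt f (f' η) η :=
      fun η hη => hd η (lt_trans hra hη.1)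
    rcases Nat.even_or_odd m with he | ho
    · -- m even : f (ηs m) < 0 < f (ηs (m+1)), F > 0 on interval
      have hsa : (-1:ℝ)^(m+1) = -1 := by rw [pow_succ, he.neg_one_pow]; norm_num
      have hsb : (-1:ℝ)^(m+1+1) = 1 := by rw [pow_succ, hsa]; norm_num
      rw [hsa] at hfa
      rw [hsb] at hfb
      have hfa' : f (ηs m) < 0 := by linarith
      have hfb' : 0 < f (ηs (m+1)) := by linarith
      obtain ⟨η₀, hη₀, hfη₀⟩ : ∃ η₀ ∈ Set.Ioo (ηs m) (ηs (m+1)), f η₀ = 0 := by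
        have h := intermediate_value_Ioo hab.le hcIcc
        have h0mem : (0:ℝ) ∈ Set.Ioo (f (ηs m)) (f (ηs (m+1))) := ⟨hfa', hfb'⟩
        obtain ⟨η₀, hη₀, hfη₀⟩ := h h0mem
        exact ⟨η₀, hη₀, hfη₀⟩
      have hFpos : ∀ η ∈ Set.Ioo (ηs m) (ηs (m+1)), 0 < α * f η + η * f' η := by
        intro η hη
        have h2 := hsignIoo m (by omega) η hη
        rw [he.neg_one_pow] at h2
        linarith
      have huniq := unique_zero_of_Fneg α (ηs m) (ηs (m+1)) hra hα
        (fun x => -(f x)) (fun x => -(f' x))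
        (fun η hη => (hdIoo η hη).neg)
        (by
          intro η hη
          have := hFpos η hη
          beta_reduce
          linarith)
      refine ⟨η₀, hη₀, hfη₀, fun η hη hfη => ?_⟩
      exact huniq η hη η₀ hη₀ (by simp [hfη]) (by simp [hfη₀])
    · -- m odd : f (ηs m) > 0 > f (ηs (m+1)), F < 0 on interval
      have hsa : (-1:ℝ)^(m+1) = 1 := by rw [pow_succ, ho.neg_one_pow]; norm_num
      have hsb : (-1:ℝ)^(m+1+1) = -1 := by rw [pow_succ, hsa]; norm_num
      rw [hsa] at hfa
      rw [hsb] at hfb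
      have hfa' : 0 < f (ηs m) := by linarith
      have hfb' : f (ηs (m+1)) < 0 := by linarith
      obtain ⟨η₀, hη₀, hfη₀⟩ : ∃ η₀ ∈ Set.Ioo (ηs m) (ηs (m+1)), f η₀ = 0 := by
        have h := intermediate_value_Ioo' hab.le hcIcc
        have h0mem : (0:ℝ) ∈ Set.Ioo (f (ηs (m+1))) (f (ηs m)) := ⟨hfb', hfa'⟩
        obtain ⟨η₀, hη₀, hfη₀⟩ := h h0mem
        exact ⟨η₀, hη₀, hfη₀⟩
      have hFneg : ∀ η ∈ Set.Ioo (ηs m) (ηs (m+1)), α * f η + η * f' η < 0 := by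
        intro η hη
        have h2 := hsignIoo m (by omega) η hη
        rw [ho.neg_one_pow] at h2
        linarith
      have huniq := unique_zero_of_Fneg α (ηs m) (ηs (m+1)) hra hα f f' hdIoo hFneg
      exact ⟨η₀, hη₀, hfη₀, fun η hη hfη => huniq η hη η₀ hη₀ hfη hfη₀⟩
  -- no zero in [ηs n, ∞)
  have hηnpos : 0 < ηs n := hroot_pos n hn le_rfl
  have htail : ∀ η : ℝ, ηs n ≤ η → f η ≠ 0 := by
    intro η hη hfη
    rcases eq_or_lt_of_le hη with h | h
    · have := hfsign n hn le_rfl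
      rw [h, hfη] at this
      simp at this
    · -- η > ηs n
      have hdIoi : ∀ x ∈ Set.Ioi (ηs n), HasDerivAt f (f' x) x :=
        fun x hx => hd x (lt_trans hηnpos hx)
      have hd'Ioi : ∀ x ∈ Set.Ioi (ηs n), HasDerivAt f' (f'' x) x :=
        fun x hx => hd' x (lt_trans hηnpos hx)
      rcases Nat.even_or_odd n with he | ho
      · -- n even : F > 0, use -f
        have hFpos : ∀ x ∈ Set.Ioi (ηs n), 0 < α * f x + x * f' x := by
          intro x hx
          have h2 := haltInf x hx
          rw [he.neg_one_pow] at h2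
          linarith
        exact tail_no_zero (N:ℝ) α κp (ηs n) hηnpos hα hκp hαN
          (fun x => -(f x)) (fun x => -(f' x)) (fun x => -(f'' x))
          (fun x hx => (hdIoi x hx).neg) (fun x hx => (hd'Ioi x hx).neg)
          (by
            intro x hx
            have h2 := hodePos x (lt_trans hηnpos hx) (hFpos x hx)
            beta_reduce
            rw [h2]
            ring)
          (by
            intro x hx
            have := hFpos x hx
            beta_reduce
            linarith)
          (by simpa using hf0.neg) η h (by simp [hfη])
      · -- n odd : F < 0
        have hFneg : ∀ x ∈ Set.Ioi (ηs n), α * f x + x * f' x < 0 := by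
          intro x hx
          have h2 := haltInf x hx
          rw [ho.neg_one_pow] at h2
          linarith
        exact tail_no_zero (N:ℝ) α κm (ηs n) hηnpos hα hκm hαN f f' f''
          hdIoi hd'Ioi
          (fun x hx => hodeNeg x (lt_trans hηnpos hx) (hFneg x hx))
          hFneg hf0 η h hfη
  have hconc3 : ∀ η : ℝ, 0 ≤ η → η ≤ ηs 1 → f η ≠ 0 :=
    fun η h1 h2 => (hfirst η h1 h2).ne'
  refine ⟨?_, hconc2, hconc3, htail⟩
  -- cardinality count
  have hch : ∀ m : ℕ, ∃ z : ℝ, 1 ≤ m → m + 1 ≤ n →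
      z ∈ Set.Ioo (ηs m) (ηs (m + 1)) ∧ f z = 0 ∧
        ∀ η ∈ Set.Ioo (ηs m) (ηs (m + 1)), f η = 0 → η = z := by
    intro m
    by_cases h : 1 ≤ m ∧ m + 1 ≤ n
    · obtain ⟨z, hz1, hz2, hz3⟩ := hconc2 m h.1 h.2
      exact ⟨z, fun _ _ => ⟨hz1, hz2, hz3⟩⟩
    · exact ⟨0, fun h1 h2 => absurd ⟨h1, h2⟩ h⟩
  choose ζ hζ using hch
  have hset : {η : ℝ | 0 ≤ η ∧ f η = 0} = ζ '' (Set.Ico 1 n) := by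
    ext η
    simp only [Set.mem_setOf_eq, Set.mem_image, Set.mem_Ico]
    constructor
    · rintro ⟨hη0, hfη⟩
      have hη1 : ηs 1 < η := by
        by_contra hcon
        push_neg at hcon
        exact hconc3 η hη0 hcon hfη
      have hηn : η < ηs n := by
        by_contra hcon
        push_neg at hcon
        exact htail η hcon hfη
      have hneroot : ∀ k : ℕ, 1 ≤ k → k ≤ n → η ≠ ηs k := by
        intro k h1 h2 heq
        have := hfsign k h1 h2
        rw [← heq, hfη] at this
        simp at this
      set m := Nat.findGreatest (fun k => ηs k < η) n with hmdef
      have hm1 : 1 ≤ m := Nat.le_findGreatest (P := fun k => ηs k < η) hn hη1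
      have hmn : m ≤ n := Nat.findGreatest_le (P := fun k => ηs k < η) n
      have hmlt : ηs m < η := Nat.findGreatest_spec (P := fun k => ηs k < η) hn hη1
      have hmne : m ≠ n := by
        intro h
        rw [h] at hmlt
        linarith
      have hm1n : m + 1 ≤ n := by omega
      have hup : η < ηs (m+1) := by
        by_contra hcon
        push_neg at hcon
        rcases eq_or_lt_of_le hcon with h | h
        · exact hneroot (m+1) (by omega) hm1n h.symm
        · have := Nat.le_findGreatest (P := fun k => ηs k < η) hm1n h
          omega
      obtain ⟨hz1, hz2, hz3⟩ := hζ m hm1 hm1n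
      exact ⟨m, ⟨hm1, by omega⟩, (hz3 η ⟨hmlt, hup⟩ hfη).symm⟩
    · rintro ⟨m, ⟨hm1, hmn⟩, rfl⟩
      obtain ⟨hz1, hz2, hz3⟩ := hζ m hm1 (by omega)
      have : 0 < ηs m := hroot_pos m hm1 (by omega)
      exact ⟨le_of_lt (lt_trans this hz1.1), hz2⟩
  rw [hset]
  have hinj : Set.InjOn ζ (Set.Ico 1 n) := by
    have key : ∀ i j : ℕ, i ∈ Set.Ico 1 n → j ∈ Set.Ico 1 n → i < j → ζ i < ζ j := by
      intro i j hi hj hij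
      have hi2 : i < n := hi.2
      have hj2 : j < n := hj.2
      obtain ⟨hi1, hi2', _⟩ := hζ i hi.1 (by omega)
      obtain ⟨hj1, hj2', _⟩ := hζ j hj.1 (by omega)
      have h1 : ηs (i+1) ≤ ηs j := by
        rcases eq_or_lt_of_le (show i + 1 ≤ j by omega) with h | h
        · rw [h]
        · exact (hlt (i+1) j h (by omega)).le
      calc ζ i < ηs (i+1) := hi1.2
        _ ≤ ηs j := h1
        _ < ζ j := hj1.1
    intro i hi j hj hij
    rcases lt_trichotomy i j with h | h | h
    · exact absurd hij (ne_of_lt (key i j hi hj h))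
    · exact h
    · exact absurd hij.symm (ne_of_lt (key j i hj hi h))
  rw [Set.InjOn.encard_image hinj, ← Finset.coe_Ico, Set.encard_coe_eq_coe_finsetCard,
    Nat.card_Ico]
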